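/- arXiv:2208.04100 — 2 statements merged into one kernel-verified Lean document; each statement's English description precedes it below -/
import Mathlib

section
/- Let E be a finite-dimensional complex inner product space and let A : ℝ → End(E) be a family of linear operators that is differentiable at 0, such that A(0) is a normal operator. Let μ₀ be an eigenvalue of A(0) of algebraic multiplicity one with unit eigenvector X. Suppose μ : ℝ → ℂ is continuous at 0 with μ(0) = μ₀ and μ(ε) is an eigenvalue of A(ε) for all ε in a neighborhood of 0. Then μ is differentiable at 0 and μ'(0) = ⟨X, A'(0)(X)⟩, where A'(0) is the derivative of A at 0. -/
open scoped InnerProductSpace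

set_option maxHeartbeats 1000000


/-- First-order perturbation of a simple eigenvalue. Let `E` be a
finite-dimensional complex inner product space and `A : ℝ → End(E)` a family of
operators that is differentiable at `0` (with derivative `A'`), such that `A 0` is a
normal operator. Let `μ₀` be an eigenvalue of `A 0` of algebraic multiplicity one
(the maximal generalized eigenspace is one-dimensional) with unit eigenvector `X`.
If `μ : ℝ → ℂ` is continuous at `0`, `μ 0 = μ₀`, and `μ ε` is an eigenvalue of `A ε`
for all `ε` in a neighborhood of `0`, then `μ` is differentiable at `0` with
`μ'(0) = ⟨X, A'(0) X⟩`. -/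
theorem simple_eigenvalue_first_order_perturbation
    {E : Type*} [NormedAddCommGroup E] [InnerProductSpace ℂ E] [FiniteDimensional ℂ E]
    (A : ℝ → (E →L[ℂ] E)) (A' : E →L[ℂ] E) (hA : HasDerivAt A A' 0)
    (hnormal : IsStarNormal (A 0))
    (μ₀ : ℂ) (X : E) (hXunit : ‖X‖ = 1) (hXeig : (A 0) X = μ₀ • X)
    (hmult : Module.finrank ℂ
      (Module.End.maxGenEigenspace ((A 0 : E →L[ℂ] E) : E →ₗ[ℂ] E) μ₀) = 1)
    (μ : ℝ → ℂ) (hcont : ContinuousAt μ 0) (hμ0 : μ 0 = μ₀)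
    (heig : ∀ᶠ ε in nhds 0,
      Module.End.HasEigenvalue ((A ε : E →L[ℂ] E) : E →ₗ[ℂ] E) (μ ε)) :
    HasDerivAt μ (inner ℂ X (A' X) : ℂ) 0 := by
  have hX0 : X ≠ 0 := by
    intro h; rw [h, norm_zero] at hXunit; norm_num at hXunit
  have hXX : ⟪X, X⟫_ℂ = 1 := by
    rw [inner_self_eq_norm_sq_to_K, hXunit]; norm_num
  -- kernel fact
  have hker : ∀ y : E, A 0 y = μ₀ • y → ∃ c : ℂ, y = c • X := by
    intro y hy
    set f : Module.End ℂ E := ((A 0 : E →L[ℂ] E) : E →ₗ[ℂ] E) with hf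
    have hmem : ∀ z : E, A 0 z = μ₀ • z → z ∈ f.maxGenEigenspace μ₀ := by
      intro z hz
      rw [Module.End.mem_maxGenEigenspace]
      exact ⟨1, by simp [hf, hz]⟩
    have hXS : X ∈ f.maxGenEigenspace μ₀ := hmem X hXeig
    have hyS : y ∈ f.maxGenEigenspace μ₀ := hmem y hy
    have hXne : (⟨X, hXS⟩ : f.maxGenEigenspace μ₀) ≠ 0 := by
      intro h; exact hX0 (congrArg Subtype.val h)
    have hspan := (finrank_eq_one_iff_of_nonzero _ hXne).mp hmult
    have : (⟨y, hyS⟩ : f.maxGenEigenspace μ₀) ∈ Submodule.span ℂ {(⟨X, hXS⟩ : f.maxGenEigenspace μ₀)} := by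
      rw [hspan]; trivial
    obtain ⟨c, hc⟩ := Submodule.mem_span_singleton.mp this
    exact ⟨c, by simpa using (congrArg Subtype.val hc).symm⟩
  -- adjoint fact
  have hadj : (ContinuousLinearMap.adjoint (A 0)) X = (starRingEnd ℂ) μ₀ • X := by
    set B := ContinuousLinearMap.adjoint (A 0) with hB
    have hcomm : ∀ z : E, A 0 (B z) = B (A 0 z) := by
      intro z
      have h := hnormal.star_comm_self
      rw [ContinuousLinearMap.star_eq_adjoint] at h
      have := congrArg (fun (S : E →L[ℂ] E) => S z) h
      simpa [ContinuousLinearMap.mul_apply] using this.symm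
    have key0 : A 0 (B X) = μ₀ • B X := by
      rw [hcomm, hXeig, map_smul]
    set y := B X - (starRingEnd ℂ) μ₀ • X with hy'
    have hy : A 0 y = μ₀ • y := by
      rw [hy', map_sub, key0, map_smul, hXeig, smul_sub, smul_comm]
    obtain ⟨c, hc⟩ := hker y hy
    have hXy : ⟪X, y⟫_ℂ = 0 := by
      rw [hy', inner_sub_right, inner_smul_right]
      rw [hB, ContinuousLinearMap.adjoint_inner_right, hXeig, inner_smul_left, hXX]
      ring
    rw [hc, inner_smul_right, hXX, mul_one] at hXy
    rw [hXy, zero_smul] at hc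
    exact sub_eq_zero.mp hc
  -- T and antilipschitz on W
  set T : E →L[ℂ] E := A 0 - μ₀ • (1 : E →L[ℂ] E) with hT
  have hTapp : ∀ z : E, T z = A 0 z - μ₀ • z := by
    intro z; simp [hT]
  have hTX : T X = 0 := by rw [hTapp, hXeig, sub_self]
  set W := (Submodule.span ℂ ({X} : Set E))ᗮ with hW
  set f : W →L[ℂ] E := T.comp (Submodule.subtypeL W) with hf2
  have hfinj : Function.Injective (f : W →ₗ[ℂ] E) := by
    rw [← LinearMap.ker_eq_bot, LinearMap.ker_eq_bot']
    intro m hm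
    have hm' : T (m : E) = 0 := hm
    rw [hTapp] at hm'
    obtain ⟨c, hc⟩ := hker m (by rw [sub_eq_zero] at hm'; exact hm')
    have horth : ⟪X, (m : E)⟫_ℂ = 0 :=
      Submodule.mem_orthogonal_singleton_iff_inner_right.mp m.2
    rw [hc, inner_smul_right, hXX, mul_one] at horth
    have : (m : E) = 0 := by rw [hc, horth, zero_smul]
    exact Subtype.ext this
  obtain ⟨K, hK0, hKanti⟩ := (LinearMap.injective_iff_antilipschitz (f : W →ₗ[ℂ] E)).mp hfinj
  have hKbound : ∀ m : W, ‖(m : E)‖ ≤ K * ‖T (m : E)‖ := by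
    intro m
    have := hKanti.le_mul_dist m 0
    simpa [dist_eq_norm, hf2] using this
  -- choose unit eigenvectors
  classical
  set P : ℝ → Prop := fun ε => ∃ u : E, ‖u‖ = 1 ∧ A ε u = μ ε • u with hPdef
  have hP : ∀ᶠ ε in nhds 0, P ε := by
    filter_upwards [heig] with ε h
    obtain ⟨u, hu⟩ := h.exists_hasEigenvector
    have hu0 : u ≠ 0 := hu.2
    have huapp : A ε u = μ ε • u := hu.apply_eq_smul
    refine ⟨‖u‖⁻¹ • u, ?_, ?_⟩
    · rw [norm_smul, norm_inv, norm_norm, inv_mul_cancel₀ (norm_ne_zero_iff.mpr hu0)]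
    · rw [(A ε).map_smul_of_tower, huapp, smul_comm]
  set v : ℝ → E := fun ε => if h : P ε then h.choose else X with hvdef
  have hv : ∀ᶠ ε in nhds 0, ‖v ε‖ = 1 ∧ A ε (v ε) = μ ε • v ε := by
    filter_upwards [hP] with ε h
    simp only [hvdef, dif_pos h]
    exact h.choose_spec
  set c : ℝ → ℂ := fun ε => ⟪X, v ε⟫_ℂ with hcdef
  set p : ℝ → E := fun ε => v ε - c ε • X with hpdef
  have hpW : ∀ ε, p ε ∈ W := by
    intro ε
    rw [hW]
    apply Submodule.mem_orthogonal_singleton_iff_inner_right.mpr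
    simp [hpdef, hcdef, inner_sub_right, inner_smul_right, hXX, hXunit]
  have hTvp : ∀ ε, T (v ε) = T (p ε) := by
    intro ε
    have : v ε = p ε + c ε • X := by rw [hpdef]; simp
    rw [this, map_add, map_smul, hTX, smul_zero, add_zero]
  -- norm of T v tends to 0
  have hAc : Filter.Tendsto (fun ε => ‖A ε - A 0‖) (nhds 0) (nhds 0) := by
    have h1 : ContinuousAt (fun ε => ‖A ε - A 0‖) 0 := (hA.continuousAt.sub continuousAt_const).norm
    have h2 := h1.tendsto
    rw [sub_self, norm_zero] at h2
    exact h2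
  have hμc : Filter.Tendsto (fun ε => ‖μ ε - μ₀‖) (nhds 0) (nhds 0) := by
    have h1 : ContinuousAt (fun ε => ‖μ ε - μ₀‖) 0 := (hcont.sub continuousAt_const).norm
    have h2 := h1.tendsto
    rw [hμ0, sub_self, norm_zero] at h2
    exact h2
  have hp0 : Filter.Tendsto (fun ε => ‖p ε‖) (nhds 0) (nhds 0) := by
    have hbound : ∀ᶠ ε in nhds 0, ‖p ε‖ ≤ K * (‖A ε - A 0‖ + ‖μ ε - μ₀‖) := by
      filter_upwards [hv] with ε ⟨hv1, hv2⟩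
      have h1 : T (v ε) = (A 0 - A ε) (v ε) + (μ ε - μ₀) • v ε := by
        rw [hTapp]
        simp only [ContinuousLinearMap.sub_apply]
        rw [hv2, sub_smul]
        abel
      have h2 : ‖T (v ε)‖ ≤ ‖A ε - A 0‖ + ‖μ ε - μ₀‖ := by
        rw [h1]
        refine le_trans (norm_add_le _ _) (add_le_add ?_ ?_)
        · calc ‖(A 0 - A ε) (v ε)‖ ≤ ‖A 0 - A ε‖ * ‖v ε‖ := (A 0 - A ε).le_opNorm _
            _ = ‖A ε - A 0‖ := by rw [hv1, mul_one, norm_sub_rev]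
        · rw [norm_smul, hv1, mul_one]
      calc ‖p ε‖ = ‖((⟨p ε, hpW ε⟩ : W) : E)‖ := rfl
        _ ≤ K * ‖T (p ε)‖ := hKbound _
        _ = K * ‖T (v ε)‖ := by rw [hTvp]
        _ ≤ K * (‖A ε - A 0‖ + ‖μ ε - μ₀‖) := by
            exact mul_le_mul_of_nonneg_left h2 (le_of_lt (by exact_mod_cast hK0))
    have hlim : Filter.Tendsto (fun ε => K * (‖A ε - A 0‖ + ‖μ ε - μ₀‖)) (nhds 0) (nhds 0) := by
      have h3 := (hAc.add hμc).const_mul (K : ℝ)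
      rw [add_zero, mul_zero] at h3
      exact h3
    exact squeeze_zero' (Filter.Eventually.of_forall (fun ε => norm_nonneg _)) hbound hlim
  -- eventually |c| >= 1/2
  have hc_half : ∀ᶠ ε in nhds 0, (1:ℝ)/2 ≤ ‖c ε‖ := by
    have hsmall : ∀ᶠ ε in nhds 0, ‖p ε‖ < 1/2 :=
      hp0.eventually (eventually_lt_nhds (by norm_num : (0:ℝ) < 1/2))
    filter_upwards [hsmall, hv] with ε h1 hv'
    have e : c ε • X = v ε - p ε := by simp [hpdef]
    have : ‖c ε‖ = ‖v ε - p ε‖ := by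
      rw [← e, norm_smul, hXunit, mul_one]
    rw [this]
    have := norm_sub_norm_le (v ε) (p ε)
    rw [hv'.1] at this
    linarith
  set L : ℂ := ⟪X, A' X⟫_ℂ with hLdef
  have hAo : (fun ε : ℝ => A ε - A 0 - ε • A') =o[nhds 0] (fun ε : ℝ => ε) := by
    have := hasDerivAt_iff_isLittleO.mp hA
    simpa using this
  have h1 : (fun ε : ℝ => ⟪X, (A ε - A 0 - ε • A') (v ε)⟫_ℂ) =o[nhds 0] (fun ε : ℝ => ε) := by
    refine Asymptotics.IsBigO.trans_isLittleO ?_ hAo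
    apply Asymptotics.IsBigO.of_bound 1
    filter_upwards [hv] with ε hv'
    calc ‖⟪X, (A ε - A 0 - ε • A') (v ε)⟫_ℂ‖
        ≤ ‖X‖ * ‖(A ε - A 0 - ε • A') (v ε)‖ := norm_inner_le_norm _ _
      _ = ‖(A ε - A 0 - ε • A') (v ε)‖ := by rw [hXunit, one_mul]
      _ ≤ ‖A ε - A 0 - ε • A'‖ * ‖v ε‖ := ContinuousLinearMap.le_opNorm _ _
      _ = 1 * ‖A ε - A 0 - ε • A'‖ := by rw [hv'.1, mul_one, one_mul]
  have h2 : (fun ε : ℝ => ε • ⟪X, A' (p ε)⟫_ℂ) =o[nhds 0] (fun ε : ℝ => ε) := by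
    rw [Asymptotics.isLittleO_iff]
    intro C hC
    have hCpos : 0 < C / (‖A'‖ + 1) := by positivity
    have hsmall : ∀ᶠ ε in nhds 0, ‖p ε‖ < C / (‖A'‖ + 1) :=
      hp0.eventually (eventually_lt_nhds hCpos)
    filter_upwards [hsmall] with ε h
    have hb : ‖⟪X, A' (p ε)⟫_ℂ‖ ≤ C := by
      calc ‖⟪X, A' (p ε)⟫_ℂ‖ ≤ ‖X‖ * ‖A' (p ε)‖ := norm_inner_le_norm _ _
        _ = ‖A' (p ε)‖ := by rw [hXunit, one_mul]
        _ ≤ ‖A'‖ * ‖p ε‖ := A'.le_opNorm _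
        _ ≤ ‖A'‖ * (C / (‖A'‖ + 1)) := by
            exact mul_le_mul_of_nonneg_left h.le (norm_nonneg _)
        _ ≤ (‖A'‖ + 1) * (C / (‖A'‖ + 1)) := by
            apply mul_le_mul_of_nonneg_right (by linarith) hCpos.le
        _ = C := by
            rw [mul_comm, div_mul_cancel₀ _ (by positivity : (‖A'‖ + 1) ≠ 0)]
    rw [norm_smul]
    exact mul_le_mul_of_nonneg_left hb (norm_nonneg _) |>.trans
      (le_of_eq (by rw [Real.norm_eq_abs]; ring))
  have hkey : (fun ε : ℝ => c ε * (μ ε - μ₀ - ε • L)) =o[nhds 0] (fun ε : ℝ => ε) := by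
    refine (h1.add h2).congr' ?_ (Filter.EventuallyEq.refl _ _)
    filter_upwards [hv] with ε hv'
    have e3 : v ε = c ε • X + p ε := by simp [hpdef]
    have e1 : (A ε - A 0 - ε • A') (v ε) = μ ε • v ε - A 0 (v ε) - ε • A' (v ε) := by
      simp [ContinuousLinearMap.sub_apply, hv'.2]
    have e2 : ⟪X, A 0 (v ε)⟫_ℂ = μ₀ * c ε := by
      rw [← ContinuousLinearMap.adjoint_inner_left, hadj, inner_smul_left, hcdef]
      simp
    have e4 : ⟪X, A' (v ε)⟫_ℂ = c ε * L + ⟪X, A' (p ε)⟫_ℂ := by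
      conv_lhs => rw [e3]
      rw [map_add, map_smul, inner_add_right, inner_smul_right, hLdef]
    have hre : ∀ (r : ℝ) (z w : E), ⟪z, r • w⟫_ℂ = (r : ℂ) * ⟪z, w⟫_ℂ := by
      intro r z w
      rw [inner_smul_right_eq_smul]
      simp [Complex.real_smul]
    rw [e1, inner_sub_right, inner_sub_right, inner_smul_right, e2, hre, e4]
    have : ⟪X, v ε⟫_ℂ = c ε := rfl
    rw [this]
    simp only [Complex.real_smul]
    ring
  rw [hasDerivAt_iff_isLittleO]
  simp only [sub_zero, hμ0]
  refine Asymptotics.IsBigO.trans_isLittleO ?_ hkey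
  apply Asymptotics.IsBigO.of_bound 2
  filter_upwards [hc_half] with ε hcε
  rw [norm_mul]
  nlinarith [norm_nonneg (μ ε - μ₀ - ε • L), norm_nonneg (c ε)]
end

section
/- Let U = ∑_a e^{iλ_a}|φ_a⟩⟨φ_a| be a unitary operator on ℂ^d with {|φ_a⟩} an orthonormal basis and λ_a ∈ ℝ, and let 𝒰(ρ) = UρU† be the associated unitary channel on d×d complex matrices. Fix indices a, b and suppose μ₀ = e^{i(λ_a−λ_b)} is an eigenvalue of 𝒰 of algebraic multiplicity one. For each ε ∈ ℝ let ℰ_ε(ρ) = ∑_{k=1}^m E_k(ε) ρ E_k(ε) where each matrix E_k(ε) is Hermitian, each map ε ↦ E_k(ε) is differentiable at 0, and ℰ_0 is the identity map. Suppose μ : ℝ → ℂ is continuous at 0 with μ(0) = μ₀ and μ(ε) is an eigenvalue of the noisy channel ℰ_ε ∘ 𝒰 for all ε in a neighborhood of 0. Then μ is differentiable at 0 and μ'(0) = r·μ₀ for some real number r; in particular Im(μ'(0)/μ(0)) = 0, so the phase λ_a − λ_b of the eigenvalue is unchanged to first order in the noise strength ε. -/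
open Matrix

open Asymptotics Filter

lemma implicit_deriv {F : ℝ × ℂ → ℂ} {L : ℝ × ℂ →L[ℝ] ℂ} {μ : ℝ → ℂ} {μ₀ β c : ℂ}
    (hF : HasFDerivAt F L (0, μ₀)) (hc : c ≠ 0)
    (hL : ∀ e : ℝ, ∀ w : ℂ, L (e, w) = β * e - c * w)
    (hcont : ContinuousAt μ 0) (hμ0 : μ 0 = μ₀)
    (hroot : ∀ᶠ ε in nhds (0:ℝ), F (ε, μ ε) = 0) :
    HasDerivAt μ (β / c) 0 := by
  have hT : Filter.Tendsto (fun ε : ℝ => (ε, μ ε)) (nhds 0) (nhds (0, μ₀)) := by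
    rw [nhds_prod_eq]
    exact Filter.Tendsto.prodMk tendsto_id (hμ0 ▸ hcont)
  have hF00 : F (0, μ₀) = 0 := by
    have := hroot.self_of_nhds
    rwa [hμ0] at this
  have o1 : (fun ε : ℝ => F (ε, μ ε) - F (0, μ₀) - L ((ε, μ ε) - (0, μ₀)))
      =o[nhds 0] (fun ε : ℝ => (ε, μ ε) - (0, μ₀)) :=
    (hF.isLittleO).comp_tendsto hT
  set ν : ℝ → ℂ := fun ε => μ ε - μ₀ with hν
  have key : (fun ε : ℝ => c * ν ε - β * ε) =o[nhds 0] (fun ε : ℝ => (ε, ν ε)) := by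
    have : (fun ε : ℝ => F (ε, μ ε) - F (0, μ₀) - L ((ε, μ ε) - (0, μ₀)))
        =ᶠ[nhds 0] (fun ε => -(β * ε - c * ν ε)) := by
      filter_upwards [hroot] with ε hε
      simp [hε, hF00, Prod.sub_def, hL, hν]
    have o2 := (o1.congr' this (Filter.EventuallyEq.refl _ _))
    have o3 : (fun ε : ℝ => c * ν ε - β * ε) =o[nhds 0]
        (fun ε : ℝ => (ε, μ ε) - (0, μ₀)) := by
      simpa [neg_sub] using o2
    apply o3.congr_right
    intro ε
    simp [Prod.sub_def, hν]
  -- step 1 : ν is big-O of ε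
  have hbound : ∀ᶠ ε : ℝ in nhds 0, ‖c * ν ε - β * ε‖ ≤ (‖c‖/2) * ‖(ε, ν ε)‖ :=
    key.def (half_pos (norm_pos_iff.mpr hc))
  have hK : ∀ᶠ ε : ℝ in nhds 0, ‖ν ε‖ ≤ ((‖c‖ + 2*‖β‖)/‖c‖) * ‖ε‖ := by
    filter_upwards [hbound] with ε hε
    have hnorm : ‖((ε : ℝ), ν ε)‖ ≤ ‖ε‖ + ‖ν ε‖ := by
      rw [Prod.norm_def]
      exact max_le (le_add_of_nonneg_right (norm_nonneg _)) (le_add_of_nonneg_left (norm_nonneg _))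
    have h1 : ‖c‖ * ‖ν ε‖ ≤ ‖c * ν ε - β * ε‖ + ‖β‖ * ‖ε‖ := by
      calc ‖c‖ * ‖ν ε‖ = ‖c * ν ε‖ := (norm_mul _ _).symm
        _ = ‖(c * ν ε - β * ε) + β * ε‖ := by ring_nf
        _ ≤ ‖c * ν ε - β * ε‖ + ‖β * ε‖ := norm_add_le _ _
        _ = ‖c * ν ε - β * ε‖ + ‖β‖ * ‖ε‖ := by rw [norm_mul]; simp
    have h2 : ‖c‖ * ‖ν ε‖ ≤ (‖c‖/2) * (‖ε‖ + ‖ν ε‖) + ‖β‖ * ‖ε‖ := by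
      refine h1.trans ?_
      have := hε.trans (mul_le_mul_of_nonneg_left hnorm (by positivity))
      linarith
    have hcpos : (0:ℝ) < ‖c‖ := norm_pos_iff.mpr hc
    rw [div_mul_eq_mul_div, le_div_iff₀ hcpos]
    nlinarith [norm_nonneg (ν ε), norm_nonneg ε]
  have hO : (fun ε : ℝ => ((ε : ℝ), ν ε)) =O[nhds 0] (fun ε : ℝ => ε) := by
    rw [isBigO_iff]
    refine ⟨1 + (‖c‖ + 2*‖β‖)/‖c‖, ?_⟩
    filter_upwards [hK] with ε hε
    rw [Prod.norm_def]
    refine max_le ?_ ?_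
    · nlinarith [norm_nonneg ε, norm_nonneg (ν ε), norm_nonneg c, norm_nonneg β,
        norm_pos_iff.mpr hc, div_nonneg (by positivity : (0:ℝ) ≤ ‖c‖ + 2*‖β‖) (norm_nonneg c)]
    · nlinarith [norm_nonneg ε, div_nonneg (by positivity : (0:ℝ) ≤ ‖c‖ + 2*‖β‖) (norm_nonneg c)]
  have key2 : (fun ε : ℝ => c * ν ε - β * ε) =o[nhds 0] (fun ε : ℝ => ε) := key.trans_isBigO hO
  have key3 : (fun ε : ℝ => ν ε - (β/c) * ε) =o[nhds 0] (fun ε : ℝ => ε) := by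
    have := key2.const_mul_left c⁻¹
    apply this.congr_left
    intro ε
    field_simp
  rw [hasDerivAt_iff_isLittleO]
  simp only [sub_zero]
  apply key3.congr_left
  intro ε
  simp only [hν, hμ0, Complex.real_smul]
  ring

open Matrix Finset

lemma perm_ne_one_two_moved {n : Type*} [DecidableEq n] {σ : Equiv.Perm n} (hσ : σ ≠ 1) :
    ∃ i1 i2 : n, i1 ≠ i2 ∧ σ i1 ≠ i1 ∧ σ i2 ≠ i2 := by
  obtain ⟨i1, hi1⟩ : ∃ i, σ i ≠ i := by
    by_contra h
    push_neg at h
    exact hσ (Equiv.ext fun x => h x)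
  exact ⟨i1, σ i1, fun h => hi1 h.symm, hi1, fun h => hi1 (σ.injective h)⟩

lemma det_deriv_diag_single_zero {n : Type*} [Fintype n] [DecidableEq n]
    (G : ℝ → Matrix n n ℂ) (D : Matrix n n ℂ) (g : n → ℂ) (p₀ : n)
    (hD : ∀ p q, HasDerivAt (fun ε => G ε p q) (D p q) 0)
    (hG0 : G 0 = diagonal g) (hp₀ : g p₀ = 0) :
    HasDerivAt (fun ε => (G ε).det)
      ((∏ p ∈ Finset.univ.erase p₀, g p) * D p₀ p₀) 0 := by
  have hdiag : ∀ i j : n, i ≠ j → G 0 i j = 0 := by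
    intro i j hij; rw [hG0]; exact Matrix.diagonal_apply_ne g hij
  have hdet : HasDerivAt (fun ε => (G ε).det)
      (∑ σ : Equiv.Perm n, ((Equiv.Perm.sign σ : ℤ) : ℂ) *
        ∑ j : n, (∏ i ∈ Finset.univ.erase j, G 0 (σ i) i) • D (σ j) j) 0 := by
    have h1 : (fun ε => (G ε).det) =
        fun ε => ∑ σ : Equiv.Perm n, ((Equiv.Perm.sign σ : ℤ) : ℂ) * ∏ i : n, G ε (σ i) i := by
      funext ε; rw [Matrix.det_apply']
    rw [h1]
    exact HasDerivAt.fun_sum (fun σ _ =>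
      (HasDerivAt.fun_finsetProd (fun i _ => hD (σ i) i)).const_mul _)
  convert hdet using 1
  rw [Finset.sum_eq_single (1 : Equiv.Perm n)]
  · rw [Finset.sum_eq_single p₀]
    · simp [hG0, hp₀, smul_eq_mul]
    · intro j _ hj
      have h0 : (∏ i ∈ Finset.univ.erase j, G 0 i i) = 0 := by
        apply Finset.prod_eq_zero (Finset.mem_erase.mpr ⟨fun h => hj h.symm, Finset.mem_univ p₀⟩)
        simp [hG0, hp₀]
      simp [h0]
    · intro h; exact absurd (Finset.mem_univ p₀) h
  · intro σ _ hσ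
    obtain ⟨i1, i2, h12, hm1, hm2⟩ := perm_ne_one_two_moved hσ
    have : ∀ j : n, (∏ i ∈ Finset.univ.erase j, G 0 (σ i) i) = 0 := by
      intro j
      rcases ne_or_eq i1 j with h | h
      · exact Finset.prod_eq_zero (Finset.mem_erase.mpr ⟨h, Finset.mem_univ _⟩) (hdiag _ _ hm1)
      · subst h
        exact Finset.prod_eq_zero (Finset.mem_erase.mpr ⟨h12.symm, Finset.mem_univ _⟩) (hdiag _ _ hm2)
    simp [this]
  · intro h; exact absurd (Finset.mem_univ 1) h

variable {d : ℕ}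

noncomputable def PhiB (φ : Fin d → (Fin d → ℂ)) : Fin d × Fin d → Matrix (Fin d) (Fin d) ℂ :=
  fun p => vecMulVec (φ p.1) (star (φ p.2))

lemma trace_inner_vmv (x y u v : Fin d → ℂ) :
    trace ((vecMulVec x (star y))ᴴ * vecMulVec u (star v))
      = (star x ⬝ᵥ u) * (star v ⬝ᵥ y) := by
  simp only [Matrix.trace, Matrix.diag_apply, Matrix.mul_apply, Matrix.conjTranspose_apply,
    Matrix.vecMulVec_apply, dotProduct, Pi.star_apply, star_mul', starRingEnd_apply, star_star]
  rw [Finset.sum_mul_sum]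
  rw [Finset.sum_comm]
  apply Finset.sum_congr rfl; intro i _
  apply Finset.sum_congr rfl; intro j _
  ring

lemma trace_inner_Phi (φ : Fin d → (Fin d → ℂ))
    (hortho : ∀ a b : Fin d, star (φ a) ⬝ᵥ φ b = if a = b then 1 else 0)
    (p q : Fin d × Fin d) :
    trace ((PhiB φ p)ᴴ * PhiB φ q) = if p = q then 1 else 0 := by
  unfold PhiB
  rw [trace_inner_vmv, hortho, hortho]
  have hpq : (p = q) ↔ (p.1 = q.1 ∧ q.2 = p.2) := by
    rw [Prod.ext_iff]; constructor <;> rintro ⟨h1, h2⟩ <;> exact ⟨h1, h2.symm⟩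
  rw [if_congr hpq rfl rfl]
  by_cases h1 : p.1 = q.1 <;> by_cases h2 : q.2 = p.2 <;> simp [h1, h2]

lemma trace_inner_Phi_sum (φ : Fin d → (Fin d → ℂ))
    (hortho : ∀ a b : Fin d, star (φ a) ⬝ᵥ φ b = if a = b then 1 else 0)
    (g : Fin d × Fin d → ℂ) (p : Fin d × Fin d) :
    trace ((PhiB φ p)ᴴ * ∑ q : Fin d × Fin d, g q • PhiB φ q) = g p := by
  rw [Matrix.mul_sum, trace_sum]
  have : ∀ q : Fin d × Fin d, trace ((PhiB φ p)ᴴ * (g q • PhiB φ q))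
      = g q * (if p = q then 1 else 0) := by
    intro q
    rw [Matrix.mul_smul, trace_smul, trace_inner_Phi φ hortho p q, smul_eq_mul]
  simp only [this]
  simp

lemma linearIndependent_Phi (φ : Fin d → (Fin d → ℂ))
    (hortho : ∀ a b : Fin d, star (φ a) ⬝ᵥ φ b = if a = b then 1 else 0) :
    LinearIndependent ℂ (PhiB φ) := by
  rw [Fintype.linearIndependent_iff]
  intro g hg p
  have h := congrArg (fun X => trace ((PhiB φ p)ᴴ * X)) hg
  rw [trace_inner_Phi_sum φ hortho g p] at h
  simpa using h

noncomputable def PhiBasis (φ : Fin d → (Fin d → ℂ)) (hd : 0 < d)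
    (hortho : ∀ a b : Fin d, star (φ a) ⬝ᵥ φ b = if a = b then 1 else 0) :
    Module.Basis (Fin d × Fin d) ℂ (Matrix (Fin d) (Fin d) ℂ) :=
  have : Nonempty (Fin d × Fin d) := ⟨(⟨0, hd⟩, ⟨0, hd⟩)⟩
  basisOfLinearIndependentOfCardEqFinrank (linearIndependent_Phi φ hortho)
    (by rw [Module.finrank_matrix]; simp)

lemma PhiBasis_coe (φ : Fin d → (Fin d → ℂ)) (hd : 0 < d)
    (hortho : ∀ a b : Fin d, star (φ a) ⬝ᵥ φ b = if a = b then 1 else 0) :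
    ⇑(PhiBasis φ hd hortho) = PhiB φ := by
  have : Nonempty (Fin d × Fin d) := ⟨(⟨0, hd⟩, ⟨0, hd⟩)⟩
  unfold PhiBasis
  exact coe_basisOfLinearIndependentOfCardEqFinrank _ _

lemma PhiBasis_repr (φ : Fin d → (Fin d → ℂ)) (hd : 0 < d)
    (hortho : ∀ a b : Fin d, star (φ a) ⬝ᵥ φ b = if a = b then 1 else 0)
    (X : Matrix (Fin d) (Fin d) ℂ) (p : Fin d × Fin d) :
    (PhiBasis φ hd hortho).repr X p = trace ((PhiB φ p)ᴴ * X) := by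
  set B := PhiBasis φ hd hortho with hB
  have hx : X = ∑ q : Fin d × Fin d, (B.repr X q) • PhiB φ q := by
    conv_lhs => rw [← B.sum_repr X]
    simp [PhiBasis_coe φ hd hortho, hB]
  conv_rhs => rw [hx]
  rw [trace_inner_Phi_sum φ hortho]

lemma U_mulVec (φ : Fin d → (Fin d → ℂ)) (lam : Fin d → ℝ)
    (U : Matrix (Fin d) (Fin d) ℂ)
    (hortho : ∀ a b : Fin d, star (φ a) ⬝ᵥ φ b = if a = b then 1 else 0)
    (hspec : U = ∑ a : Fin d,
      Complex.exp (Complex.I * (lam a : ℂ)) • vecMulVec (φ a) (star (φ a)))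
    (c : Fin d) : U *ᵥ φ c = Complex.exp (Complex.I * (lam c : ℂ)) • φ c := by
  funext i
  have hUij : ∀ i j, U i j = ∑ a : Fin d,
      Complex.exp (Complex.I * (lam a : ℂ)) * (φ a i * star (φ a j)) := by
    intro i j
    rw [hspec]
    simp [Matrix.sum_apply, Matrix.vecMulVec_apply, mul_assoc]
  have : (U *ᵥ φ c) i = ∑ j, ∑ a : Fin d,
      Complex.exp (Complex.I * (lam a : ℂ)) * (φ a i * star (φ a j)) * φ c j := by
    simp [Matrix.mulVec, dotProduct, hUij, Finset.sum_mul]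
  rw [this, Finset.sum_comm]
  have h2 : ∀ a : Fin d, ∑ j, Complex.exp (Complex.I * (lam a : ℂ)) * (φ a i * star (φ a j)) * φ c j
      = Complex.exp (Complex.I * (lam a : ℂ)) * φ a i * (star (φ a) ⬝ᵥ φ c) := by
    intro a
    rw [dotProduct, Finset.mul_sum]
    apply Finset.sum_congr rfl
    intro j _
    simp [Pi.star_apply]
    ring
  simp only [h2, hortho]
  rw [Finset.sum_eq_single c]
  · simp [mul_comm]
  · intro a _ ha; simp [ha]
  · intro h; exact absurd (Finset.mem_univ c) h

lemma UPhiU (φ : Fin d → (Fin d → ℂ)) (lam : Fin d → ℝ)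
    (U : Matrix (Fin d) (Fin d) ℂ)
    (hortho : ∀ a b : Fin d, star (φ a) ⬝ᵥ φ b = if a = b then 1 else 0)
    (hspec : U = ∑ a : Fin d,
      Complex.exp (Complex.I * (lam a : ℂ)) • vecMulVec (φ a) (star (φ a)))
    (p : Fin d × Fin d) :
    U * PhiB φ p * Uᴴ
      = Complex.exp (Complex.I * ((lam p.1 : ℂ) - (lam p.2 : ℂ))) • PhiB φ p := by
  funext i j
  have h1 : ∀ l, (U * PhiB φ p) i l = (U *ᵥ φ p.1) i * star (φ p.2 l) := by
    intro l
    simp only [Matrix.mul_apply, PhiB, Matrix.vecMulVec_apply, Matrix.mulVec, dotProduct,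
      Pi.star_apply, Finset.sum_mul]
    apply Finset.sum_congr rfl; intro k _; ring
  have h2 : (U * PhiB φ p * Uᴴ) i j
      = (U *ᵥ φ p.1) i * star ((U *ᵥ φ p.2) j) := by
    rw [Matrix.mul_apply]
    simp only [h1, Matrix.conjTranspose_apply]
    have : (U *ᵥ φ p.2) j = ∑ l, U j l * φ p.2 l := by
      simp [Matrix.mulVec, dotProduct]
    rw [this, star_sum, Finset.mul_sum]
    apply Finset.sum_congr rfl; intro l _
    simp only [star_mul']
    ring
  rw [h2, U_mulVec φ lam U hortho hspec, U_mulVec φ lam U hortho hspec]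
  simp only [Pi.smul_apply, smul_eq_mul, star_mul', Matrix.smul_apply, PhiB,
    Matrix.vecMulVec_apply, Pi.star_apply]
  have hconj : star (Complex.exp (Complex.I * (lam p.2 : ℂ)))
      = Complex.exp (-(Complex.I * (lam p.2 : ℂ))) := by
    have : star (Complex.exp (Complex.I * (lam p.2 : ℂ)))
        = (starRingEnd ℂ) (Complex.exp (Complex.I * (lam p.2 : ℂ))) := rfl
    rw [this, ← Complex.exp_conj]
    congr 1
    simp [_root_.map_mul, Complex.conj_I, Complex.conj_ofReal]
  rw [hconj, mul_sub, Complex.exp_sub]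
  rw [div_eq_mul_inv, ← Complex.exp_neg]
  ring

lemma det_toMatrix_sub_smul_eq_zero {V : Type*} [AddCommGroup V] [Module ℂ V]
    {n : Type*} [Fintype n] [DecidableEq n] (B : Module.Basis n ℂ V)
    {f : Module.End ℂ V} {μ : ℂ} (h : f.HasEigenvalue μ) :
    (LinearMap.toMatrix B B f - μ • 1).det = 0 := by
  rw [Module.End.hasEigenvalue_iff] at h
  obtain ⟨v, hv, hv0⟩ := Submodule.ne_bot_iff _ |>.mp h
  rw [Module.End.mem_eigenspace_iff] at hv
  rw [← Matrix.exists_mulVec_eq_zero_iff]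
  refine ⟨⇑(B.repr v), ?_, ?_⟩
  · intro hz
    apply hv0
    have : B.repr v = 0 := DFunLike.coe_injective hz
    simpa using congrArg (⇑B.repr.symm) this
  · rw [Matrix.sub_mulVec, LinearMap.toMatrix_mulVec_repr, Matrix.smul_mulVec,
      Matrix.one_mulVec, hv, _root_.map_smul]
    simp

lemma trace_herm_real (ρ F : Matrix (Fin d) (Fin d) ℂ) (hF : Fᴴ = F) :
    (starRingEnd ℂ) (trace (ρᴴ * (F * ρ * F))) = trace (ρᴴ * (F * ρ * F)) := by
  have h1 : (starRingEnd ℂ) (trace (ρᴴ * (F * ρ * F))) = trace ((ρᴴ * (F * ρ * F))ᴴ) := by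
    rw [Matrix.trace_conjTranspose]; rfl
  rw [h1]
  have h2 : (ρᴴ * (F * ρ * F))ᴴ = F * (ρᴴ * (F * ρ)) := by
    simp only [Matrix.conjTranspose_mul, Matrix.conjTranspose_conjTranspose, hF]
    noncomm_ring
  rw [h2, Matrix.trace_mul_comm]
  congr 1
  noncomm_ring

lemma conj_exp_I_real (r : ℝ) :
    (starRingEnd ℂ) (Complex.exp (Complex.I * (r : ℂ)))
      = Complex.exp (-(Complex.I * (r : ℂ))) := by
  rw [← Complex.exp_conj]
  congr 1
  simp [_root_.map_mul, Complex.conj_I, Complex.conj_ofReal]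

/-- Theorem 1 of the paper: Let `U = ∑ a, e^{iλ_a}|φ_a⟩⟨φ_a|` be unitary
(`{φ_a}` orthonormal basis, `λ_a ∈ ℝ`) with channel `𝒰(ρ) = U ρ U†`. Fix indices
`a, b` and suppose `μ₀ = e^{i(λ_a − λ_b)}` is an eigenvalue of `𝒰` of algebraic
multiplicity one. For each `ε ∈ ℝ` let `ℰ_ε(ρ) = ∑ k, E_k(ε) ρ E_k(ε)` with each
`E_k(ε)` Hermitian, each `ε ↦ E_k(ε)` differentiable at `0`, and `ℰ_0` the identity.
If `μ : ℝ → ℂ` is continuous at `0`, `μ 0 = μ₀`, and `μ ε` is an eigenvalue of the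
noisy channel `ℰ_ε ∘ 𝒰` for `ε` in a neighborhood of `0`, then `μ` is differentiable
at `0` with `μ'(0) = r • μ₀` for some real `r`; in particular
`Im(μ'(0)/μ(0)) = 0`, i.e. the phase is unchanged to first order. -/
theorem hermitian_kraus_noise_keeps_phase_to_first_order
    {d m : ℕ}
    (U : Matrix (Fin d) (Fin d) ℂ) (hU : U ∈ Matrix.unitaryGroup (Fin d) ℂ)
    (φ : Fin d → (Fin d → ℂ)) (lam : Fin d → ℝ)
    (hortho : ∀ a b : Fin d, star (φ a) ⬝ᵥ φ b = if a = b then 1 else 0)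
    (hspan : Submodule.span ℂ (Set.range φ) = ⊤)
    (hspec : U = ∑ a : Fin d,
      Complex.exp (Complex.I * (lam a : ℂ)) • vecMulVec (φ a) (star (φ a)))
    (a b : Fin d) (μ₀ : ℂ)
    (hμ₀ : μ₀ = Complex.exp (Complex.I * ((lam a : ℂ) - (lam b : ℂ))))
    (𝒰 : Module.End ℂ (Matrix (Fin d) (Fin d) ℂ))
    (h𝒰 : ∀ ρ, 𝒰 ρ = U * ρ * Uᴴ)
    (hμ₀eig : Module.End.HasEigenvalue 𝒰 μ₀)
    (hmult : Module.finrank ℂ (Module.End.maxGenEigenspace 𝒰 μ₀) = 1)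
    (E : Fin m → ℝ → Matrix (Fin d) (Fin d) ℂ)
    (hherm : ∀ k ε, (E k ε)ᴴ = E k ε)
    (hdiff : ∀ k (i j : Fin d), DifferentiableAt ℝ (fun ε => E k ε i j) 0)
    (hE0 : ∀ ρ : Matrix (Fin d) (Fin d) ℂ, ∑ k : Fin m, E k 0 * ρ * E k 0 = ρ)
    (N : ℝ → Module.End ℂ (Matrix (Fin d) (Fin d) ℂ))
    (hN : ∀ ε ρ, N ε ρ = ∑ k : Fin m, E k ε * (U * ρ * Uᴴ) * E k ε)
    (μ : ℝ → ℂ) (hcont : ContinuousAt μ 0) (hμ0 : μ 0 = μ₀)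
    (heig : ∀ᶠ ε in nhds 0, Module.End.HasEigenvalue (N ε) (μ ε)) :
    ∃ r : ℝ, HasDerivAt μ ((r : ℂ) * μ₀) 0 ∧ (((r : ℂ) * μ₀) / μ 0).im = 0 := by
  classical
  have hd : 0 < d := a.pos
  set Φ : Fin d × Fin d → Matrix (Fin d) (Fin d) ℂ := PhiB φ with hΦdef
  set B : Module.Basis (Fin d × Fin d) ℂ (Matrix (Fin d) (Fin d) ℂ) := PhiBasis φ hd hortho
    with hBdef
  set dg : Fin d × Fin d → ℂ :=
    fun p => Complex.exp (Complex.I * ((lam p.1 : ℂ) - (lam p.2 : ℂ))) with hdgdef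
  set A : ℝ → Matrix (Fin d × Fin d) (Fin d × Fin d) ℂ :=
    fun ε => LinearMap.toMatrix B B (N ε) with hAdef
  have hBp : ∀ p, B p = Φ p := fun p => congrFun (PhiBasis_coe φ hd hortho) p
  have hUPhi : ∀ p, U * Φ p * Uᴴ = dg p • Φ p := fun p => UPhiU φ lam U hortho hspec p
  have hN0 : ∀ ρ, N 0 ρ = U * ρ * Uᴴ := fun ρ => by rw [hN]; exact hE0 _
  -- entries of A
  have hAtr : ∀ ε p q, A ε p q = trace ((Φ p)ᴴ * (N ε (Φ q))) := by
    intro ε p q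
    simp only [hAdef]
    rw [LinearMap.toMatrix_apply, hBp, hBdef, PhiBasis_repr φ hd hortho]
  -- A 0 is diagonal
  have hNB : ∀ q, N 0 (B q) = dg q • B q := by
    intro q
    rw [hBp, hN0, hUPhi]
  have hA0 : A 0 = Matrix.diagonal dg := by
    funext p q
    simp only [hAdef]
    rw [LinearMap.toMatrix_apply, hNB, _root_.map_smul, Module.Basis.repr_self,
      Finsupp.smul_apply, Finsupp.single_apply]
    by_cases h : p = q
    · simp [h, Matrix.diagonal_apply]
    · have h' : ¬ q = p := fun hh => h hh.symm
      simp [h', Matrix.diagonal_apply_ne _ h]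
  have hdiagsub : ∀ z : ℂ, A 0 - z • 1 = Matrix.diagonal (fun p => dg p - z) := by
    intro z
    rw [hA0]
    funext p q
    by_cases h : p = q
    · simp [h, Matrix.diagonal_apply, Matrix.one_apply]
    · simp [h, Matrix.diagonal_apply_ne _ h, Matrix.one_apply_ne h]
  -- existence of the diagonal index achieving μ₀
  have h𝒰N0 : N 0 = 𝒰 := LinearMap.ext fun ρ => by rw [hN0, h𝒰]
  have hdet0 : (A 0 - μ₀ • 1).det = 0 := by
    simp only [hAdef]
    exact det_toMatrix_sub_smul_eq_zero B (h𝒰N0 ▸ hμ₀eig)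
  rw [hdiagsub, Matrix.det_diagonal] at hdet0
  obtain ⟨pstar, -, hps0⟩ := Finset.prod_eq_zero_iff.mp hdet0
  have hps : dg pstar = μ₀ := by rwa [sub_eq_zero] at hps0
  -- uniqueness
  have huniq : ∀ q, q ≠ pstar → dg q ≠ μ₀ := by
    intro q hq hdgq
    have hmem : ∀ p, dg p = μ₀ → Φ p ∈ Module.End.maxGenEigenspace 𝒰 μ₀ := by
      intro p hp
      rw [Module.End.mem_maxGenEigenspace]
      refine ⟨1, ?_⟩
      rw [pow_one]
      have : 𝒰 (Φ p) = μ₀ • Φ p := by rw [h𝒰, hUPhi, hp]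
      simp [LinearMap.sub_apply, this, LinearMap.smul_apply]
    have hΦne : Φ pstar ≠ 0 := by
      have := B.ne_zero pstar
      rwa [hBp] at this
    have hvne : (⟨Φ pstar, hmem pstar hps⟩ :
        Module.End.maxGenEigenspace 𝒰 μ₀) ≠ 0 := by
      simp only [ne_eq, Submodule.mk_eq_zero]
      exact hΦne
    obtain ⟨cc, hcc⟩ := (finrank_eq_one_iff_of_nonzero' _ hvne).mp hmult
      ⟨Φ q, hmem q hdgq⟩
    have hcc' : cc • Φ pstar = Φ q := congrArg Subtype.val hcc
    have hrep := congrArg (fun X => (B.repr X) q) hcc'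
    simp only [← hBp, _root_.map_smul, Module.Basis.repr_self, Finsupp.smul_apply,
      Finsupp.single_apply] at hrep
    rw [if_neg (fun hh : pstar = q => hq hh.symm)] at hrep
    simp at hrep
  -- c and its nonvanishing
  set c : ℂ := ∏ p ∈ Finset.univ.erase pstar, (dg p - μ₀) with hcdef
  have hc : c ≠ 0 := by
    rw [hcdef, Finset.prod_ne_zero_iff]
    intro p hp
    exact sub_ne_zero.mpr (huniq p (Finset.mem_erase.mp hp).1)
  -- differentiability of the entries of A
  have hEntry : ∀ (P C : Matrix (Fin d) (Fin d) ℂ) (k : Fin m),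
      DifferentiableAt ℝ (fun ε => trace (P * (E k ε * C * E k ε))) 0 := by
    intro P C k
    have hfun : (fun ε => trace (P * (E k ε * C * E k ε)))
        = fun ε => ∑ i, ∑ j, P i j * ∑ t, (∑ s, E k ε j s * C s t) * E k ε t i := by
      funext ε
      simp [Matrix.trace, Matrix.diag, Matrix.mul_apply]
    rw [hfun]
    refine DifferentiableAt.fun_sum fun i _ => ?_
    refine DifferentiableAt.fun_sum fun j _ => ?_
    refine DifferentiableAt.const_mul ?_ _
    refine DifferentiableAt.fun_sum fun t _ => ?_
    exact (DifferentiableAt.fun_sum fun s _ => (hdiff k j s).mul_const (C s t)).mul (hdiff k t i)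
  have hAform : ∀ p q, (fun ε => A ε p q)
      = fun ε => ∑ k, trace ((Φ p)ᴴ * (E k ε * (U * Φ q * Uᴴ) * E k ε)) := by
    intro p q
    funext ε
    rw [hAtr ε p q, hN, Matrix.mul_sum, trace_sum]
  have hdiffA : ∀ p q, DifferentiableAt ℝ (fun ε => A ε p q) 0 := by
    intro p q
    rw [hAform]
    exact DifferentiableAt.fun_sum fun k _ => hEntry _ _ k
  -- the determinant function
  set F : ℝ × ℂ → ℂ := fun x => (A x.1 - x.2 • 1).det with hFdef
  have hFdiff : DifferentiableAt ℝ F (0, μ₀) := by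
    have hre : F = fun x : ℝ × ℂ => ∑ σ : Equiv.Perm (Fin d × Fin d),
        ((Equiv.Perm.sign σ : ℤ) : ℂ) *
          ∏ p, (A x.1 (σ p) p - x.2 * (1 : Matrix (Fin d × Fin d) (Fin d × Fin d) ℂ) (σ p) p) := by
      funext x
      simp only [hFdef]
      rw [Matrix.det_apply']
      simp only [Matrix.sub_apply, Matrix.smul_apply, smul_eq_mul]
    rw [hre]
    refine DifferentiableAt.fun_sum fun σ _ => ?_
    refine DifferentiableAt.const_mul ?_ _
    have hfac : ∀ p : Fin d × Fin d, ∃ Lp : ℝ × ℂ →L[ℝ] ℂ,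
        HasFDerivAt (fun x : ℝ × ℂ =>
          A x.1 (σ p) p - x.2 * (1 : Matrix (Fin d × Fin d) (Fin d × Fin d) ℂ) (σ p) p)
          Lp (0, μ₀) := by
      intro p
      have h1 : DifferentiableAt ℝ (fun x : ℝ × ℂ => A x.1 (σ p) p) (0, μ₀) :=
        DifferentiableAt.comp (g := fun ε => A ε (σ p) p) (0, μ₀) (hdiffA (σ p) p) (differentiableAt_fst (𝕜 := ℝ) (E := ℝ) (F := ℂ))
      have h2 : DifferentiableAt ℝ (fun x : ℝ × ℂ =>
          x.2 * (1 : Matrix (Fin d × Fin d) (Fin d × Fin d) ℂ) (σ p) p) (0, μ₀) :=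
        differentiableAt_snd.mul (differentiableAt_const _)
      exact ⟨_, (h1.sub h2).hasFDerivAt⟩
    choose Lp hLp using hfac
    exact (HasFDerivAt.finsetProd (u := Finset.univ) (fun p _ => hLp p)).differentiableAt
  set L : ℝ × ℂ →L[ℝ] ℂ := fderiv ℝ F (0, μ₀) with hLdef
  have hFder : HasFDerivAt F L (0, μ₀) := hFdiff.hasFDerivAt
  -- z-direction
  have hF0z : ∀ z : ℂ, F (0, z) = ∏ p, (dg p - z) := by
    intro z
    simp only [hFdef]
    rw [hdiagsub z, Matrix.det_diagonal]
  have hg : HasDerivAt (fun z : ℂ => ∏ p, (dg p - z)) (-c) μ₀ := by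
    have h := HasDerivAt.fun_finsetProd (u := Finset.univ)
      (f := fun (p : Fin d × Fin d) (z : ℂ) => dg p - z) (f' := fun _ => (-1 : ℂ))
      (x := μ₀) (fun p _ => (hasDerivAt_id μ₀).const_sub (dg p))
    refine h.congr_deriv (Eq.symm ?_)
    rw [Finset.sum_eq_single pstar]
    · rw [hcdef]; simp
    · intro j _ hj
      have : (∏ i ∈ Finset.univ.erase j, (dg i - μ₀)) = 0 :=
        Finset.prod_eq_zero (Finset.mem_erase.mpr ⟨fun hh => hj hh.symm, Finset.mem_univ _⟩)
          (by rw [hps]; exact sub_self μ₀)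
      simp [this]
    · intro hh; exact absurd (Finset.mem_univ pstar) hh
  have hLz : ∀ w : ℂ, L (0, w) = -(c * w) := by
    have hinr : HasFDerivAt (fun z : ℂ => ((0 : ℝ), z))
        (ContinuousLinearMap.inr ℝ ℝ ℂ) μ₀ := (ContinuousLinearMap.inr ℝ ℝ ℂ).hasFDerivAt
    have hcomp1 : HasFDerivAt (fun z : ℂ => F (0, z))
        (L.comp (ContinuousLinearMap.inr ℝ ℝ ℂ)) μ₀ := hFder.comp μ₀ hinr
    have hcomp2 : HasFDerivAt (fun z : ℂ => F (0, z))
        (ContinuousLinearMap.restrictScalars ℝ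
          (ContinuousLinearMap.smulRight (1 : ℂ →L[ℂ] ℂ) (-c))) μ₀ := by
      have : (fun z : ℂ => F (0, z)) = fun z => ∏ p, (dg p - z) := funext hF0z
      rw [this]
      exact (hg.hasFDerivAt).restrictScalars ℝ
    have hu := hcomp1.unique hcomp2
    intro w
    have hw := DFunLike.congr_fun hu w
    rw [ContinuousLinearMap.comp_apply, ContinuousLinearMap.inr_apply] at hw
    rw [hw]
    simp only [ContinuousLinearMap.coe_restrictScalars',
      ContinuousLinearMap.smulRight_apply, ContinuousLinearMap.one_apply, smul_eq_mul]
    ring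
  -- ε-direction
  set D₀ : ℂ := deriv (fun ε => A ε pstar pstar) 0 with hD₀def
  have hGder : HasDerivAt (fun ε : ℝ => F (ε, μ₀)) (c * D₀) 0 := by
    have hDm : ∀ p q : Fin d × Fin d, HasDerivAt (fun ε => (A ε - μ₀ • 1) p q)
        ((Matrix.of fun p q => deriv (fun ε => A ε p q) 0) p q) 0 := by
      intro p q
      have heq : (fun ε => (A ε - μ₀ • 1) p q)
          = fun ε => A ε p q - μ₀ * (1 : Matrix (Fin d × Fin d) (Fin d × Fin d) ℂ) p q := by
        funext ε
        simp [Matrix.sub_apply, Matrix.smul_apply, smul_eq_mul]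
      rw [heq]
      simpa using ((hdiffA p q).hasDerivAt).sub_const (μ₀ * (1 : Matrix (Fin d × Fin d) (Fin d × Fin d) ℂ) p q)
    have h := det_deriv_diag_single_zero (fun ε => A ε - μ₀ • 1)
      (Matrix.of fun p q => deriv (fun ε => A ε p q) 0) (fun p => dg p - μ₀) pstar
      hDm (hdiagsub μ₀) (by simp [hps])
    simpa [hcdef, hD₀def] using h
  have hβ : L (1, 0) = c * D₀ := by
    have hj : HasFDerivAt (fun ε : ℝ => (ε, μ₀))
        ((ContinuousLinearMap.id ℝ ℝ).prod 0) 0 :=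
      (hasFDerivAt_id (0:ℝ)).prodMk (hasFDerivAt_const μ₀ 0)
    have hcomp := (hFder.comp (0:ℝ) hj).hasDerivAt
    have hval : (L.comp ((ContinuousLinearMap.id ℝ ℝ).prod 0)) 1 = L (1, 0) := by
      simp
    rw [hval] at hcomp
    exact hcomp.unique hGder
  have hL : ∀ (e : ℝ) (w : ℂ), L (e, w) = (c * D₀) * e - c * w := by
    intro e w
    have h1 : ((e : ℝ), w) = e • ((1:ℝ), (0:ℂ)) + ((0:ℝ), w) := by
      simp [Prod.ext_iff]
    rw [h1, map_add, _root_.map_smul, hβ, hLz w, Complex.real_smul]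
    ring
  -- eventual root
  have hroot : ∀ᶠ ε in nhds (0:ℝ), F (ε, μ ε) = 0 := by
    filter_upwards [heig] with ε hε
    simp only [hFdef, hAdef]
    exact det_toMatrix_sub_smul_eq_zero B hε
  have hder : HasDerivAt μ ((c * D₀) / c) 0 :=
    implicit_deriv hFder hc hL hcont hμ0 hroot
  have hderD : HasDerivAt μ D₀ 0 := by
    rwa [mul_comm, mul_div_assoc, div_self hc, mul_one] at hder
  -- realness
  have hnorm : (starRingEnd ℂ) μ₀ * μ₀ = 1 := by
    have hcast : ((lam a : ℂ) - lam b) = ((lam a - lam b : ℝ) : ℂ) := by push_cast; ring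
    rw [hμ₀, hcast, conj_exp_I_real, ← Complex.exp_add]
    simp
  have hAS : ∀ ε, A ε pstar pstar
      = μ₀ * ∑ k, trace ((Φ pstar)ᴴ * (E k ε * Φ pstar * E k ε)) := by
    intro ε
    rw [hAtr, hN, Matrix.mul_sum, trace_sum, Finset.mul_sum]
    refine Finset.sum_congr rfl fun k _ => ?_
    rw [hUPhi pstar, hps]
    rw [Matrix.mul_smul, Matrix.smul_mul, Matrix.mul_smul, trace_smul, smul_eq_mul]
  have hSim : ∀ ε : ℝ, ((starRingEnd ℂ) μ₀ * A ε pstar pstar).im = 0 := by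
    intro ε
    rw [hAS ε, ← mul_assoc, hnorm, one_mul]
    have hconjsum : (starRingEnd ℂ) (∑ k, trace ((Φ pstar)ᴴ * (E k ε * Φ pstar * E k ε)))
        = ∑ k, trace ((Φ pstar)ᴴ * (E k ε * Φ pstar * E k ε)) := by
      rw [map_sum]
      exact Finset.sum_congr rfl fun k _ => trace_herm_real (Φ pstar) (E k ε) (hherm k ε)
    exact Complex.conj_eq_iff_im.mp hconjsum
  have hDA : HasDerivAt (fun ε => A ε pstar pstar) D₀ 0 := (hdiffA pstar pstar).hasDerivAt
  have hDS : HasDerivAt (fun ε => ((starRingEnd ℂ) μ₀ * A ε pstar pstar))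
      ((starRingEnd ℂ) μ₀ * D₀) 0 := hDA.const_mul _
  have hImDeriv : HasDerivAt (fun ε => ((starRingEnd ℂ) μ₀ * A ε pstar pstar).im)
      (((starRingEnd ℂ) μ₀ * D₀).im) 0 :=
    (Complex.imCLM.hasFDerivAt.comp_hasDerivAt 0 hDS)
  have hIm0 : (((starRingEnd ℂ) μ₀ * D₀)).im = 0 := by
    have hconstf : (fun ε : ℝ => ((starRingEnd ℂ) μ₀ * A ε pstar pstar).im)
        = fun _ => (0:ℝ) := funext hSim
    rw [hconstf] at hImDeriv
    exact hImDeriv.unique (hasDerivAt_const 0 0)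
  refine ⟨((starRingEnd ℂ) μ₀ * D₀).re, ?_, ?_⟩
  · have hre : ((((starRingEnd ℂ) μ₀ * D₀).re : ℝ) : ℂ) = (starRingEnd ℂ) μ₀ * D₀ :=
      Complex.ext (by simp) (by simp [hIm0])
    have hfin : ((((starRingEnd ℂ) μ₀ * D₀).re : ℝ) : ℂ) * μ₀ = D₀ := by
      rw [hre]
      calc (starRingEnd ℂ) μ₀ * D₀ * μ₀ = D₀ * ((starRingEnd ℂ) μ₀ * μ₀) := by ring
        _ = D₀ := by rw [hnorm, mul_one]
    rw [hfin]
    exact hderD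
  · rw [hμ0]
    have hμ₀ne : μ₀ ≠ 0 := by rw [hμ₀]; exact Complex.exp_ne_zero _
    rw [mul_div_assoc, div_self hμ₀ne, mul_one]
    simp
end
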